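/- Let t be a real number with |t| < 1 and let A_n(t) denote the n-th derivative at x = 0 of the function x ↦ (1-t)/(e^{x(t-1)} - t). Then for every n ∈ ℕ, the series Σ_{j=0}^{∞} t^j (j+1)^n converges and equals A_n(t)/(1-t)^{n+1}. -/

import Mathlib

private lemma aux_summable_pow (q : ℝ) (hq0 : 0 ≤ q) (hq : q < 1) (n : ℕ) :
    Summable (fun j : ℕ => ((j : ℝ) + 1) ^ n * q ^ j) := by
  rcases eq_or_lt_of_le hq0 with h0 | h0
  · apply summable_of_ne_finset_zero (s := {0})
    intro j hj
    simp only [Finset.mem_singleton] at hj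
    rw [← h0, zero_pow hj, mul_zero]
  · have h : Summable (fun j : ℕ => (j : ℝ) ^ n * q ^ j) :=
      summable_pow_mul_geometric_of_norm_lt_one n (by rwa [Real.norm_eq_abs, abs_of_pos h0])
    have h2 : Summable ((fun j : ℕ => (j : ℝ) ^ n * q ^ j) ∘ (fun j => j + 1)) :=
      h.comp_injective (add_left_injective 1)
    have h3 := h2.mul_left (1 / q)
    apply h3.congr
    intro j
    simp only [Function.comp]
    push_cast
    field_simp
    ring

theorem eulerian_series (t : ℝ) (ht : |t| < 1)
    (A : ℕ → ℝ)
    (hA : ∀ n, A n = iteratedDeriv n (fun x : ℝ => (1 - t) / (Real.exp (x * (t - 1)) - t)) 0) :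
    ∀ n : ℕ, HasSum (fun j : ℕ => t ^ j * ((j : ℝ) + 1) ^ n) (A n / (1 - t) ^ (n + 1)) := by
  have ht1 : t < 1 := lt_of_le_of_lt (le_abs_self t) ht
  set c : ℝ := 1 - t with hc_def
  have hc : 0 < c := by simp only [hc_def]; linarith
  -- choose r > 0 with |t| * exp (c * r) < 1
  obtain ⟨r, hr0, hqr⟩ : ∃ r : ℝ, 0 < r ∧ |t| * Real.exp (c * r) < 1 := by
    have hcont : ContinuousAt (fun r : ℝ => |t| * Real.exp (c * r)) 0 := by fun_prop
    have h0 : (fun r : ℝ => |t| * Real.exp (c * r)) 0 < 1 := by simpa using ht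
    have hev : ∀ᶠ r in nhds (0 : ℝ), |t| * Real.exp (c * r) < 1 :=
      hcont.eventually_lt continuousAt_const h0
    rcases Metric.eventually_nhds_iff.1 hev with ⟨ε, hε, hball⟩
    refine ⟨ε / 2, by linarith, hball ?_⟩
    rw [Real.dist_eq, sub_zero, abs_of_pos (by linarith)]
    linarith
  set q : ℝ := |t| * Real.exp (c * r) with hq_def
  have hq0 : 0 ≤ q := mul_nonneg (abs_nonneg t) (Real.exp_pos _).le
  set f : ℝ → ℝ := fun x : ℝ => (1 - t) / (Real.exp (x * (t - 1)) - t) with hf_def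
  set E : ℕ → ℕ → ℝ → ℝ := fun n j x =>
    (1 - t) * (((j : ℝ) + 1) * c) ^ n * t ^ j * Real.exp (((j : ℝ) + 1) * c * x) with hE_def
  -- uniform bound on the ball
  have hbound : ∀ n : ℕ, ∀ j : ℕ, ∀ x : ℝ, |x| < r →
      ‖E n j x‖ ≤ (1 - t) * c ^ n * Real.exp (c * r) * (((j : ℝ) + 1) ^ n * q ^ j) := by
    intro n j x hx
    have hj1 : (0:ℝ) ≤ (j : ℝ) + 1 := by positivity
    have hxr : x ≤ r := le_of_lt (lt_of_le_of_lt (le_abs_self x) hx)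
    have hexp_le : Real.exp (((j : ℝ) + 1) * c * x) ≤ Real.exp (((j : ℝ) + 1) * c * r) :=
      Real.exp_le_exp.2 (mul_le_mul_of_nonneg_left hxr (by positivity))
    have hexp_eq : Real.exp (((j : ℝ) + 1) * c * r) = Real.exp (c * r) * (Real.exp (c * r)) ^ j := by
      rw [show ((j : ℝ) + 1) * c * r = (j : ℝ) * (c * r) + c * r by ring, Real.exp_add,
        Real.exp_nat_mul]
      ring
    calc ‖E n j x‖ = (1 - t) * (((j : ℝ) + 1) * c) ^ n * |t| ^ j
          * Real.exp (((j : ℝ) + 1) * c * x) := by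
          rw [hE_def]
          simp only [Real.norm_eq_abs, abs_mul, abs_pow, Real.abs_exp, abs_of_nonneg hj1,
            abs_of_pos hc, abs_of_pos (show (0:ℝ) < 1 - t by linarith)]
      _ ≤ (1 - t) * (((j : ℝ) + 1) * c) ^ n * |t| ^ j
          * (Real.exp (c * r) * (Real.exp (c * r)) ^ j) := by
          rw [← hexp_eq]
          apply mul_le_mul_of_nonneg_left hexp_le
          positivity
      _ = (1 - t) * c ^ n * Real.exp (c * r) * (((j : ℝ) + 1) ^ n * q ^ j) := by
          rw [hq_def, mul_pow, mul_pow]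
          ring
  have husum : ∀ n : ℕ, Summable (fun j : ℕ =>
      (1 - t) * c ^ n * Real.exp (c * r) * (((j : ℝ) + 1) ^ n * q ^ j)) :=
    fun n => (aux_summable_pow q hq0 hqr n).mul_left _
  have hsumE : ∀ n : ℕ, ∀ x : ℝ, |x| < r → Summable (fun j : ℕ => E n j x) :=
    fun n x hx => Summable.of_norm_bounded (husum n) (fun j => hbound n j x hx)
  -- key induction
  have key : ∀ n : ℕ, ∀ x : ℝ, |x| < r → HasSum (fun j : ℕ => E n j x) (iteratedDeriv n f x) := by
    intro n
    induction n with
    | zero =>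
      intro x hx
      rw [iteratedDeriv_zero]
      have hxr : x ≤ r := le_of_lt (lt_of_le_of_lt (le_abs_self x) hx)
      have hlt : |t * Real.exp (c * x)| < 1 := by
        rw [abs_mul, Real.abs_exp]
        calc |t| * Real.exp (c * x) ≤ |t| * Real.exp (c * r) := by
              apply mul_le_mul_of_nonneg_left _ (abs_nonneg t)
              exact Real.exp_le_exp.2 (mul_le_mul_of_nonneg_left hxr hc.le)
          _ < 1 := hqr
      have hgeom := hasSum_geometric_of_abs_lt_one hlt
      have h2 := hgeom.mul_left ((1 - t) * Real.exp (c * x))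
      have hden : 0 < 1 - t * Real.exp (c * x) := by
        have := (abs_lt.1 hlt).2
        linarith
      have hexw : Real.exp (x * (t - 1)) = (Real.exp (c * x))⁻¹ := by
        rw [← Real.exp_neg]
        congr 1
        simp only [hc_def]
        ring
      have hep : Real.exp (c * x) ≠ 0 := (Real.exp_pos _).ne'
      have h3 : Real.exp (x * (t - 1)) - t
          = (1 - t * Real.exp (c * x)) / Real.exp (c * x) := by
        rw [hexw]
        field_simp
      have hfval : (1 - t) * Real.exp (c * x) * (1 - t * Real.exp (c * x))⁻¹ = f x := by
        rw [hf_def]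
        simp only
        rw [h3, div_div_eq_mul_div, div_eq_mul_inv]
      rw [← hfval]
      apply h2.congr_fun
      intro j
      rw [hE_def]
      simp only [pow_zero, mul_one, mul_pow]
      rw [show ((j : ℝ) + 1) * c * x = (j : ℝ) * (c * x) + c * x by ring, Real.exp_add,
        Real.exp_nat_mul]
      ring
    | succ n ih =>
      intro x hx
      have hS : Summable (fun j : ℕ => E (n + 1) j x) := hsumE (n + 1) x hx
      have hxball : x ∈ Metric.ball (0 : ℝ) r := by
        rw [mem_ball_zero_iff, Real.norm_eq_abs]; exact hx
      have hderiv : HasDerivAt (fun y => ∑' j : ℕ, E n j y) (∑' j : ℕ, E (n + 1) j x) x := by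
        apply hasDerivAt_tsum_of_isPreconnected (husum (n + 1)) Metric.isOpen_ball
          (convex_ball (0:ℝ) r).isPreconnected
          (g' := fun j y => E (n + 1) j y)
        · intro j y hy
          have hbase : HasDerivAt (fun z : ℝ => Real.exp (((j : ℝ) + 1) * c * z))
              (Real.exp (((j : ℝ) + 1) * c * y) * (((j : ℝ) + 1) * c * 1)) y :=
            ((hasDerivAt_id y).const_mul (((j : ℝ) + 1) * c)).exp
          have h4 := hbase.const_mul ((1 - t) * (((j : ℝ) + 1) * c) ^ n * t ^ j)
          convert h4 using 1
          · rfl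
          rw [hE_def]
          ring
        · intro j y hy
          rw [mem_ball_zero_iff, Real.norm_eq_abs] at hy
          exact hbound (n + 1) j y hy
        · exact hxball
        · exact hsumE n x hx
        · exact hxball
      have heq : iteratedDeriv n f =ᶠ[nhds x] (fun y => ∑' j : ℕ, E n j y) := by
        filter_upwards [Metric.isOpen_ball.mem_nhds hxball] with y hy
        rw [mem_ball_zero_iff, Real.norm_eq_abs] at hy
        exact ((ih y hy).tsum_eq).symm
      have hval : iteratedDeriv (n + 1) f x = ∑' j : ℕ, E (n + 1) j x := by
        rw [iteratedDeriv_succ, heq.deriv_eq, hderiv.deriv]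
      rw [hval]
      exact hS.hasSum
  -- conclusion
  intro n
  have h0 := key n 0 (by simpa using hr0)
  have hpow : c ^ (n + 1) ≠ 0 := pow_ne_zero _ hc.ne'
  have h1 := h0.div_const (c ^ (n + 1))
  rw [hA n]
  apply h1.congr_fun
  intro j
  rw [hE_def]
  simp only [mul_zero, Real.exp_zero, mul_one, mul_pow]
  rw [show (1 : ℝ) - t = c from rfl]
  field_simp
  ring
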